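/- Let c > 0, ε > 0, C > 0 with ε < c·r₂/4 and r₂ < c/(2C), and let x : [0, ∞) → ℝⁿ be differentiable with (d/dτ)‖x(τ)‖² ≤ −2c‖x(τ)‖² + 2ε‖x(τ)‖ + 2C‖x(τ)‖³ whenever ‖x(τ)‖ ≤ r₂. If ‖x(0)‖ < r₂, then ‖x(τ)‖ < r₂ for all τ ≥ 0. -/

import Mathlib

theorem stmt_14 (n : ℕ) (c ε C r₂ : ℝ)
    (hc : 0 < c) (hε : 0 < ε) (hC : 0 < C)
    (hε' : ε < c * r₂ / 4) (hr₂ : r₂ < c / (2 * C))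
    (x : ℝ → EuclideanSpace ℝ (Fin n)) (hx : Differentiable ℝ x)
    (hderiv : ∀ τ, 0 ≤ τ → ‖x τ‖ ≤ r₂ →
      deriv (fun s => ‖x s‖ ^ 2) τ ≤
        -2 * c * ‖x τ‖ ^ 2 + 2 * ε * ‖x τ‖ + 2 * C * ‖x τ‖ ^ 3)
    (h0 : ‖x 0‖ < r₂) :
    ∀ τ, 0 ≤ τ → ‖x τ‖ < r₂ := by
  have hr2pos : 0 < r₂ := by nlinarith
  set f : ℝ → ℝ := fun s => ‖x s‖ ^ 2 with hf_def
  have hf : Differentiable ℝ f := hx.norm_sq (𝕜 := ℝ)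
  have hcont : Continuous fun s => ‖x s‖ := hx.continuous.norm
  by_contra h
  push_neg at h
  obtain ⟨τ₁, hτ₁0, hτ₁⟩ := h
  set S : Set ℝ := {t : ℝ | 0 ≤ t ∧ r₂ ≤ ‖x t‖} with hS_def
  have hSne : S.Nonempty := ⟨τ₁, hτ₁0, hτ₁⟩
  have hSclosed : IsClosed S := by
    apply IsClosed.inter
    · exact isClosed_Ici
    · exact isClosed_le continuous_const hcont
  have hSbdd : BddBelow S := ⟨0, fun t ht => ht.1⟩
  set t₀ : ℝ := sInf S with ht₀_def
  have ht₀S : t₀ ∈ S := hSclosed.csInf_mem hSne hSbdd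
  have ht₀0 : 0 ≤ t₀ := ht₀S.1
  have ht₀pos : 0 < t₀ := by
    rcases ht₀0.lt_or_eq with h' | h'
    · exact h'
    · exfalso; rw [← h'] at ht₀S; exact absurd ht₀S.2 (not_le.mpr h0)
  have hbefore : ∀ s, 0 ≤ s → s < t₀ → ‖x s‖ < r₂ := by
    intro s hs0 hst
    by_contra hge
    push_neg at hge
    exact absurd (csInf_le hSbdd ⟨hs0, hge⟩) (not_le.mpr hst)
  -- ‖x t₀‖ = r₂
  have heq : ‖x t₀‖ = r₂ := by
    refine le_antisymm ?_ ht₀S.2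
    have hlim : Filter.Tendsto (fun s => ‖x s‖) (nhdsWithin t₀ (Set.Iio t₀)) (nhds ‖x t₀‖) :=
      (hcont.tendsto t₀).mono_left nhdsWithin_le_nhds
    refine le_of_tendsto hlim ?_
    filter_upwards [Ioo_mem_nhdsLT ht₀pos] with s hs
    exact (hbefore s hs.1.le hs.2).le
  -- derivative of f at t₀ is nonneg
  have hmax : ∀ s, 0 ≤ s → s < t₀ → f s ≤ f t₀ := by
    intro s hs0 hst
    have := hbefore s hs0 hst
    simp only [hf_def, heq]
    exact pow_le_pow_left₀ (norm_nonneg _) this.le 2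
  have hd : HasDerivAt f (deriv f t₀) t₀ := (hf t₀).hasDerivAt
  have hslope : Filter.Tendsto (slope f t₀) (nhdsWithin t₀ {t₀}ᶜ) (nhds (deriv f t₀)) :=
    hasDerivAt_iff_tendsto_slope.mp hd
  have hslope' : Filter.Tendsto (slope f t₀) (nhdsWithin t₀ (Set.Iio t₀)) (nhds (deriv f t₀)) :=
    hslope.mono_left (nhdsWithin_mono _ (fun s hs => ne_of_lt hs))
  have hderiv_nonneg : 0 ≤ deriv f t₀ := by
    refine ge_of_tendsto hslope' ?_
    filter_upwards [Ioo_mem_nhdsLT ht₀pos] with s hs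
    have h1 : f s - f t₀ ≤ 0 := sub_nonpos.mpr (hmax s hs.1.le hs.2)
    have h2 : s - t₀ ≤ 0 := sub_nonpos.mpr hs.2.le
    rw [slope_def_field]
    exact div_nonneg_of_nonpos h1 h2
  have hbound := hderiv t₀ ht₀0 heq.le
  rw [heq] at hbound
  have h2C : 2 * C * r₂ < c := by
    rw [lt_div_iff₀ (by positivity)] at hr₂
    linarith
  nlinarith [hbound, hderiv_nonneg, sq_nonneg r₂, mul_pos hr2pos hr2pos]
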